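/- Let G be an oriented graph on n vertices satisfying the Ore-degree condition, and suppose uv ∉ E(G) for distinct vertices u, v. If the number of 1-connectors of (u,v) is less than 2^{-24}n, the number of 2-connectors is less than 2^{-24}n², and the number of 3-connectors is less than 2^{-24}n³, then defining N̄⁺⁺(u) = {w ∉ N⁺(u) : |N⁺(u) ∩ N⁻(w)| ≥ 2^{-8}n} and N̄⁻⁻(v) = {w ∉ N⁻(v) : |N⁻(v) ∩ N⁺(w)| ≥ 2^{-8}n}, one has |N̄⁺⁺(u)| + |N̄⁻⁻(v)| > 11n/16 − 9(deg⁺(u) + deg⁻(v))/16. -/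

import Mathlib

open Finset

/-- Out-degree of a vertex in a digraph given by an edge relation. -/
def degPlus {V : Type} [Fintype V] (E : V → V → Prop) [DecidableRel E] (x : V) : ℕ :=
  (Finset.univ.filter fun y => E x y).card

/-- In-degree of a vertex in a digraph given by an edge relation. -/
def degMinus {V : Type} [Fintype V] (E : V → V → Prop) [DecidableRel E] (x : V) : ℕ :=
  (Finset.univ.filter fun y => E y x).card

/-- An oriented graph: no loops and no 2-cycles. -/
def Oriented {V : Type} (E : V → V → Prop) : Prop :=
  (∀ x, ¬ E x x) ∧ ∀ x y, E x y → ¬ E y x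

/-- Number of 1-connectors of `(u,v)`: vertices `w` with `uw, wv ∈ E(G)`. -/
def oneConnectors {V : Type} [Fintype V] [DecidableEq V] (E : V → V → Prop) [DecidableRel E]
    (u v : V) : ℕ :=
  (Finset.univ.filter fun w : V => w ≠ u ∧ w ≠ v ∧ E u w ∧ E w v).card

/-- Number of 2-connectors of `(u,v)`: directed paths `w₁w₂` with `uw₁, w₂v ∈ E(G)`. -/
def twoConnectors {V : Type} [Fintype V] [DecidableEq V] (E : V → V → Prop) [DecidableRel E]
    (u v : V) : ℕ :=
  ((Finset.univ ×ˢ Finset.univ : Finset (V × V)).filter fun p =>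
    p.1 ≠ p.2 ∧ p.1 ≠ u ∧ p.1 ≠ v ∧ p.2 ≠ u ∧ p.2 ≠ v ∧
      E u p.1 ∧ E p.1 p.2 ∧ E p.2 v).card

/-- Number of 3-connectors of `(u,v)`: directed paths `w₁w₂w₃` with `uw₁, w₃v ∈ E(G)`. -/
def threeConnectors {V : Type} [Fintype V] [DecidableEq V] (E : V → V → Prop) [DecidableRel E]
    (u v : V) : ℕ :=
  ((Finset.univ ×ˢ Finset.univ ×ˢ Finset.univ : Finset (V × V × V)).filter fun p =>
    p.1 ≠ p.2.1 ∧ p.1 ≠ p.2.2 ∧ p.2.1 ≠ p.2.2 ∧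
    p.1 ≠ u ∧ p.1 ≠ v ∧ p.2.1 ≠ u ∧ p.2.1 ≠ v ∧ p.2.2 ≠ u ∧ p.2.2 ≠ v ∧
      E u p.1 ∧ E p.1 p.2.1 ∧ E p.2.1 p.2.2 ∧ E p.2.2 v).card

namespace Stmt7Aux

set_option linter.unusedSectionVars false
set_option maxHeartbeats 2000000

variable {V : Type} [Fintype V] [DecidableEq V]

lemma sum_card_comm (F G : Finset V) (r : V → V → Prop) [DecidableRel r] :
    ∑ x ∈ F, (G.filter (fun y => r x y)).card = ∑ y ∈ G, (F.filter (fun x => r x y)).card := by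
  simp only [card_filter]; exact Finset.sum_comm

lemma pairs_card (F G : Finset V) (r : V → V → Prop) [DecidableRel r] :
    ((F ×ˢ G).filter (fun p => r p.1 p.2)).card = ∑ x ∈ F, (G.filter (fun y => r x y)).card := by
  rw [card_filter, Finset.sum_product]; simp only [card_filter]

lemma half_bound {E : V → V → Prop} [DecidableRel E] (hor : Oriented E) (F : Finset V) :
    2 * ((F ×ˢ F).filter (fun p => E p.1 p.2)).card ≤ F.card * F.card - F.card := by
  classical
  set X := (F ×ˢ F).filter (fun p => E p.1 p.2) with hX
  have hsub : X ⊆ F.offDiag := by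
    intro p hp
    rw [hX, mem_filter, mem_product] at hp
    refine mem_offDiag.2 ⟨hp.1.1, hp.1.2, fun h => ?_⟩
    have h2 := hp.2
    rw [h] at h2
    exact hor.1 p.2 h2
  have hsub2 : X.image Prod.swap ⊆ F.offDiag := by
    intro p hp
    rw [mem_image] at hp
    obtain ⟨q, hq, rfl⟩ := hp
    rw [hX, mem_filter, mem_product] at hq
    refine mem_offDiag.2 ⟨hq.1.2, hq.1.1, fun h => ?_⟩
    simp only [Prod.fst_swap, Prod.snd_swap] at h
    have h2 := hq.2
    rw [h] at h2
    exact hor.1 q.1 h2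
  have hdisj : Disjoint X (X.image Prod.swap) := by
    rw [Finset.disjoint_left]
    intro p hp hp2
    rw [mem_image] at hp2
    obtain ⟨q, hq, hqe⟩ := hp2
    rw [hX, mem_filter] at hp hq
    have h2 : E p.2 p.1 := by
      rw [← hqe]
      simpa using hq.2
    exact hor.2 _ _ hp.2 h2
  have h1 := card_le_card (union_subset hsub hsub2)
  rw [card_union_of_disjoint hdisj, card_image_of_injective _ Prod.swap_injective, Finset.offDiag_card] at h1
  omega

lemma half_real {k m : ℕ} (h : 2 * k ≤ m * m - m) : (k : ℝ) ≤ ((m:ℝ) * m - m) / 2 := by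
  have hm : m ≤ m * m := by
    cases m with
    | zero => simp
    | succ l => exact Nat.le_mul_of_pos_left _ (Nat.succ_pos l)
  have h2 : 2 * k + m ≤ m * m := by omega
  have := (Nat.cast_le (α := ℝ)).2 h2
  push_cast at this
  linarith


end Stmt7Aux

/-- Reversed relation. -/
def revRel {V : Type} (E : V → V → Prop) : V → V → Prop := fun x y => E y x

instance revRelDec {V : Type} (E : V → V → Prop) [h : DecidableRel E] :
    DecidableRel (revRel E) := fun a b => h b a

namespace Stmt7Aux

set_option linter.unusedSectionVars false
set_option maxHeartbeats 2000000

variable {V : Type} [Fintype V] [DecidableEq V]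

lemma card_filter_congr' {p q : V → Prop} (hp : DecidablePred p) (hq : DecidablePred q)
    (h : ∀ w, p w ↔ q w) :
    (@Finset.filter V p hp univ).card = (@Finset.filter V q hq univ).card := by
  congr 1
  ext w
  rw [mem_filter, mem_filter]
  exact ⟨fun ⟨hw, hpw⟩ => ⟨hw, (h w).1 hpw⟩, fun ⟨hw, hqw⟩ => ⟨hw, (h w).2 hqw⟩⟩

lemma total_deg {E : V → V → Prop} [DecidableRel E] (hor : Oriented E) (n : ℕ)
    (hn : Fintype.card V = n) :
    2 * (∑ y ∈ univ, degMinus E y) + n ≤ n * n := by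
  have h1 : ∑ y ∈ (univ : Finset V), degMinus E y
      = ((univ ×ˢ univ : Finset (V × V)).filter (fun p => E p.1 p.2)).card := by
    rw [pairs_card, sum_card_comm]
    rfl
  have h2 := half_bound hor (univ : Finset V)
  rw [card_univ, hn] at h2
  have hnn : n ≤ n * n := by
    cases n with
    | zero => simp
    | succ m => exact Nat.le_mul_of_pos_left _ (Nat.succ_pos m)
  omega

lemma deg_lb {E : V → V → Prop} [DecidableRel E] (n : ℕ) (hn : Fintype.card V = n)
    (hor : Oriented E)
    (hOre : ∀ x y : V, x ≠ y → ¬ E x y →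
      ((degPlus E x : ℝ) + (degMinus E y : ℝ)) ≥ (3 * n - 3) / 4)
    (u : V) (h12 : 12 ≤ n) :
    ((n : ℝ) - 1) / 8 ≤ (degPlus E u : ℝ) := by
  classical
  set S := univ.filter (fun y => E u y) with hS
  have hdp : degPlus E u = S.card := rfl
  have huS : u ∉ S := by simp [hS, hor.1 u]
  set K := univ \ insert u S with hK
  have h1 : (insert u S).card = S.card + 1 := card_insert_of_notMem huS
  have h3 : S.card + 1 ≤ n := by
    rw [← h1, ← hn]; exact card_le_univ _
  have hKcard : K.card = n - (S.card + 1) := by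
    rw [hK, card_sdiff_of_subset (subset_univ _), card_univ, hn, h1]
  have hOreK : ∀ y ∈ K, max 0 ((3 * (n:ℝ) - 3) / 4 - S.card) ≤ (degMinus E y : ℝ) := by
    intro y hy
    rw [hK, mem_sdiff, mem_insert] at hy
    have hyu : u ≠ y := fun h => hy.2 (Or.inl h.symm)
    have hyS : y ∉ S := fun h => hy.2 (Or.inr h)
    have hne : ¬ E u y := fun h => hyS (by simp [hS, h])
    have ho := hOre u y hyu hne
    rw [hdp] at ho
    exact max_le (by positivity) (by linarith)
  have hsum : (K.card : ℝ) * max 0 ((3 * (n:ℝ) - 3) / 4 - S.card)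
      ≤ ∑ y ∈ K, (degMinus E y : ℝ) := by
    have := Finset.card_nsmul_le_sum K (fun y => (degMinus E y : ℝ)) _ hOreK
    rwa [nsmul_eq_mul] at this
  have htot : ∑ y ∈ K, (degMinus E y : ℝ) ≤ ((n:ℝ) * n - n) / 2 := by
    have hsub : ∑ y ∈ K, (degMinus E y : ℝ) ≤ ∑ y ∈ univ, (degMinus E y : ℝ) :=
      sum_le_sum_of_subset_of_nonneg (subset_univ _) (fun _ _ _ => by positivity)
    have h2 := total_deg hor n hn
    have h2' : (2 : ℝ) * (∑ y ∈ univ, (degMinus E y : ℝ)) + n ≤ n * n := by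
      exact_mod_cast h2
    linarith
  by_contra hcon
  push_neg at hcon
  rw [hdp] at hcon
  have hKr : (K.card : ℝ) = n - (S.card + 1) := by
    rw [hKcard]; push_cast [h3]; ring
  set dp := (S.card : ℝ) with hdpr
  have hdp0 : (0:ℝ) ≤ dp := by positivity
  have hb1 : (3 * (n:ℝ) - 3) / 4 - dp ≤ max 0 ((3 * (n:ℝ) - 3) / 4 - dp) := le_max_right _ _
  have hk0 : (0:ℝ) ≤ (n:ℝ) - 1 - dp := by
    have : dp < ((n:ℝ) - 1) / 8 := hcon
    linarith
  have hprod : ((n:ℝ) - 1 - dp) * ((3 * (n:ℝ) - 3) / 4 - dp)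
      ≤ ((n:ℝ) - 1 - dp) * max 0 ((3 * (n:ℝ) - 3) / 4 - dp) :=
    mul_le_mul_of_nonneg_left hb1 hk0
  have hchain : ((n:ℝ) - 1 - dp) * ((3 * (n:ℝ) - 3) / 4 - dp) ≤ ((n:ℝ) * n - n) / 2 := by
    have heq : (K.card : ℝ) = (n:ℝ) - 1 - dp := by rw [hKr]; ring
    rw [heq] at hsum
    linarith [hsum, htot, hprod]
  have k1 : 7 * ((n:ℝ) - 1) / 8 < (n:ℝ) - 1 - dp := by linarith
  have k2 : 5 * ((n:ℝ) - 1) / 8 < (3 * (n:ℝ) - 3) / 4 - dp := by linarith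
  have k3 : (7 * ((n:ℝ) - 1) / 8) * (5 * ((n:ℝ) - 1) / 8)
      < ((n:ℝ) - 1 - dp) * ((3 * (n:ℝ) - 3) / 4 - dp) := by
    apply mul_lt_mul'' k1 k2 <;> nlinarith [(by exact_mod_cast h12 : (12:ℝ) ≤ n)]
  have k4 : (0:ℝ) ≤ ((n:ℝ) - 1) * (3 * (n:ℝ) - 35) := by
    have hn12 : (12:ℝ) ≤ n := by exact_mod_cast h12
    apply mul_nonneg <;> linarith
  linarith [k3, hchain, k4]

lemma deg_pos {E : V → V → Prop} [DecidableRel E] (n : ℕ) (hn : Fintype.card V = n)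
    (hor : Oriented E)
    (hOre : ∀ x y : V, x ≠ y → ¬ E x y →
      ((degPlus E x : ℝ) + (degMinus E y : ℝ)) ≥ (3 * n - 3) / 4)
    (u : V) (h4 : 4 ≤ n) :
    1 ≤ degPlus E u := by
  classical
  by_contra h
  push_neg at h
  have h0 : degPlus E u = 0 := by omega
  have hS0 : (univ.filter fun y => E u y) = ∅ := card_eq_zero.1 h0
  have hnoE : ∀ y, ¬ E u y := by
    intro y hy
    have : y ∈ (univ.filter fun y => E u y) := mem_filter.2 ⟨mem_univ _, hy⟩
    rw [hS0] at this
    exact notMem_empty _ this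
  have hOreK : ∀ y ∈ univ.erase u, (3 * (n:ℝ) - 3) / 4 ≤ (degMinus E y : ℝ) := by
    intro y hy
    have hyu : u ≠ y := fun hh => (mem_erase.1 hy).1 hh.symm
    have ho := hOre u y hyu (hnoE y)
    rw [h0] at ho
    push_cast at ho
    linarith
  have hsum : ((univ.erase u).card : ℝ) * ((3 * (n:ℝ) - 3) / 4)
      ≤ ∑ y ∈ univ.erase u, (degMinus E y : ℝ) := by
    have := Finset.card_nsmul_le_sum (univ.erase u) (fun y => (degMinus E y : ℝ)) _ hOreK
    rwa [nsmul_eq_mul] at this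
  have hec : ((univ.erase u).card : ℝ) = (n:ℝ) - 1 := by
    rw [card_erase_of_mem (mem_univ _), card_univ, hn]
    have : 1 ≤ n := by omega
    push_cast [this]
    ring
  have htot : ∑ y ∈ univ.erase u, (degMinus E y : ℝ) ≤ ((n:ℝ) * n - n) / 2 := by
    have hsub : ∑ y ∈ univ.erase u, (degMinus E y : ℝ) ≤ ∑ y ∈ univ, (degMinus E y : ℝ) :=
      sum_le_sum_of_subset_of_nonneg (subset_univ _) (fun _ _ _ => by positivity)
    have h2' : (2 : ℝ) * (∑ y ∈ univ, (degMinus E y : ℝ)) + n ≤ n * n := by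
      exact_mod_cast total_deg hor n hn
    linarith
  rw [hec] at hsum
  have hn4 : (4:ℝ) ≤ n := by exact_mod_cast h4
  nlinarith [hsum, htot, hn4]

/-- Arithmetic for the first expansion bound (large `n`). -/
lemma arith1 (n dp dm a c1 c2 SR M : ℝ)
    (hn : 256 ≤ n)
    (h1 : (dp - c1) * M ≤ (dp * dp - dp) / 2 + dp * a + c2 + c1 + SR)
    (hM1 : (3 * n - 3) / 4 - dm ≤ M) (hM0 : 0 ≤ M) (hMle : M ≤ 3 * n / 4)
    (hc10 : 0 ≤ c1) (hc1 : c1 ≤ n / 16777216)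
    (hc20 : 0 ≤ c2) (hc2 : c2 ≤ n * n / 16777216)
    (hSR0 : 0 ≤ SR) (hSR : SR ≤ n / 256 * (n - dp - dm + c1 - 2))
    (hdp8 : (n - 1) / 8 ≤ dp) (hdpn : dp ≤ n)
    (hd1 : (3 * n - 3) / 4 ≤ dp + dm)
    (ha0 : 0 ≤ a) :
    a ≥ (3 * n - 3) / 4 - dm - (dp - 1) / 2 - 6 * (1 / 256) * n := by
  have hn0 : (0 : ℝ) < n := by linarith
  have hdp0 : (0 : ℝ) < dp := by linarith
  have hc1M : c1 * M ≤ n / 16777216 * (3 * n / 4) :=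
    mul_le_mul hc1 hMle hM0 (by linarith)
  have hSR' : SR ≤ n / 256 * (n / 4 + c1 - 5 / 4) := by
    have h := mul_le_mul_of_nonneg_left (show n - dp - dm + c1 - 2 ≤ n / 4 + c1 - 5 / 4 by linarith)
      (show (0:ℝ) ≤ n / 256 by linarith)
    linarith
  have hnc1 : n * c1 ≤ n * (n / 16777216) := mul_le_mul_of_nonneg_left hc1 hn0.le
  have hkdp : 6 * (1 / 256) * n * ((n - 1) / 8) ≤ 6 * (1 / 256) * n * dp :=
    mul_le_mul_of_nonneg_left hdp8 (by linarith)
  have hnn : 256 * n ≤ n * n := by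
    have := mul_le_mul_of_nonneg_right hn hn0.le; linarith
  have hM' : dp * ((3 * n - 3) / 4 - dm) ≤ dp * M := mul_le_mul_of_nonneg_left hM1 hdp0.le
  have hmain : dp * ((3 * n - 3) / 4 - dm - (dp - 1) / 2 - 6 * (1 / 256) * n) ≤ dp * a := by
    linarith [hM', h1, hc1M, hSR', hkdp, hnn, hnc1]
  exact le_of_mul_le_mul_left (by linarith [hmain]) hdp0

/-- Arithmetic for the second expansion bound (large `n`). -/
lemma arith2 (n dp dm a c1 c2 X2 SR sS sT : ℝ)
    (hn : 256 ≤ n)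
    (hA3 : ((dp - c1) * (dm - c1) - c2) * ((3 * n - 3) / 4) ≤ (dm - c1) * sS + (dp - c1) * sT)
    (hU1 : sS ≤ (dp * dp - dp) / 2 + dp * a + c2 + c1 + SR)
    (hU2 : sT ≤ c2 + a * c1 + X2 + (n - dp - dm + c1) * dm + (dm * dm - dm) / 2)
    (hsS : 0 ≤ sS) (hsT : 0 ≤ sT)
    (hc10 : 0 ≤ c1) (hc1 : c1 ≤ n / 16777216)
    (hc20 : 0 ≤ c2) (hc2 : c2 ≤ n * n / 16777216)
    (hX20 : 0 ≤ X2) (hX2 : X2 ≤ n * n / 65536)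
    (hSR0 : 0 ≤ SR) (hSR : SR ≤ n / 256 * (n - dp - dm + c1 - 2))
    (hdp8 : (n - 1) / 8 ≤ dp) (hdm8 : (n - 1) / 8 ≤ dm) (hdpn : dp ≤ n) (hdmn : dm ≤ n)
    (hd1 : (3 * n - 3) / 4 ≤ dp + dm) (hd2 : dp + dm ≤ n - 2 + c1)
    (ha0 : 0 ≤ a) (han : a ≤ n) (hc1dp : c1 ≤ dp) (hc1dm : c1 ≤ dm) :
    a ≥ (dp + dm) / 2 - n / 4 + 1 / 4 - 6 * (1 / 256) * n := by
  have hn0 : (0 : ℝ) < n := by linarith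
  have hdp0 : (0 : ℝ) < dp := by linarith
  have hdm0 : (0 : ℝ) < dm := by linarith
  have hQ0 : (0 : ℝ) ≤ (3 * n - 3) / 4 := by linarith
  have e1 : (dm - c1) * sS ≤ dm * ((dp * dp - dp) / 2 + c2 + c1 + SR) + dp * dm * a := by
    have h1 : 0 ≤ c1 * sS := mul_nonneg hc10 hsS
    have h2 : dm * sS ≤ dm * ((dp * dp - dp) / 2 + dp * a + c2 + c1 + SR) :=
      mul_le_mul_of_nonneg_left hU1 hdm0.le
    linarith [h1, h2]
  have e2 : (dp - c1) * sT ≤ dp * (c2 + X2 + (n - dp - dm + c1) * dm + (dm * dm - dm) / 2)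
      + n * (n * (n / 16777216)) := by
    have h1 : 0 ≤ c1 * sT := mul_nonneg hc10 hsT
    have h2 : dp * sT ≤ dp * (c2 + a * c1 + X2 + (n - dp - dm + c1) * dm + (dm * dm - dm) / 2) :=
      mul_le_mul_of_nonneg_left hU2 hdp0.le
    have hac : a * c1 ≤ n * (n / 16777216) := mul_le_mul han hc1 hc10 hn0.le
    have h3 : dp * (a * c1) ≤ n * (n * (n / 16777216)) :=
      mul_le_mul hdpn hac (mul_nonneg ha0 hc10) hn0.le
    linarith [h1, h2, h3]
  have hcc : 0 ≤ c1 * (dp + dm) + c2 := by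
    have := mul_nonneg hc10 (show (0:ℝ) ≤ dp + dm by linarith); linarith
  have hq : (c1 * (dp + dm) + c2) * ((3 * n - 3) / 4) ≤ (c1 * (dp + dm) + c2) * (3 * n / 4) :=
    mul_le_mul_of_nonneg_left (by linarith) hcc
  have e3 : dp * dm * ((3 * n - 3) / 4) - (c1 * (dp + dm) + c2) * (3 * n / 4)
      ≤ ((dp - c1) * (dm - c1) - c2) * ((3 * n - 3) / 4) := by
    linarith [hq, mul_nonneg (mul_nonneg hc10 hc10) hQ0]
  have hdmSR : dm * SR ≤ dm * (n / 256 * (n - dp - dm + c1 - 2)) :=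
    mul_le_mul_of_nonneg_left hSR hdm0.le
  have hfac : n / 3 ≤ 7 * dp + dm - n - c1 + 2 := by linarith
  have hmain : n / 256 * ((n - 1) / 8) * (n / 3)
      ≤ n / 256 * dm * (7 * dp + dm - n - c1 + 2) := by
    have h1 : n / 256 * ((n - 1) / 8) ≤ n / 256 * dm :=
      mul_le_mul_of_nonneg_left hdm8 (by linarith)
    have h2 : (0:ℝ) ≤ n / 256 * dm := mul_nonneg (by linarith) hdm0.le
    calc n / 256 * ((n - 1) / 8) * (n / 3) ≤ n / 256 * dm * (n / 3) :=
          mul_le_mul_of_nonneg_right h1 (by linarith)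
      _ ≤ n / 256 * dm * (7 * dp + dm - n - c1 + 2) :=
          mul_le_mul_of_nonneg_left hfac h2
  have j1 : dp * dm * c1 ≤ n * n * (n / 16777216) := by
    have h1 : dp * dm ≤ n * n := mul_le_mul hdpn hdmn hdm0.le hn0.le
    exact mul_le_mul h1 hc1 hc10 (mul_nonneg hn0.le hn0.le)
  have j2 : dm * (c2 + c1) ≤ n * (n * n / 16777216 + n / 16777216) := by
    exact mul_le_mul hdmn (by linarith) (by linarith) hn0.le
  have j3 : dp * (c2 + X2) ≤ n * (n * n / 16777216 + n * n / 65536) := by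
    exact mul_le_mul hdpn (by linarith) (by linarith) hn0.le
  have j4 : (c1 * (dp + dm) + c2) * (3 * n / 4)
      ≤ (n / 16777216 * (2 * n) + n * n / 16777216) * (3 * n / 4) := by
    have h1 : c1 * (dp + dm) ≤ n / 16777216 * (2 * n) :=
      mul_le_mul hc1 (by linarith) (by linarith) (by linarith)
    exact mul_le_mul_of_nonneg_right (by linarith) (by linarith)
  have hnn : 256 * n ≤ n * n := by
    have := mul_le_mul_of_nonneg_right hn hn0.le; linarith
  have hnnn : 256 * (n * n) ≤ n * n * n := by
    have := mul_le_mul_of_nonneg_right hnn hn0.le; nlinarith [hn0.le]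
  have e5 : dp * dm * ((dp + dm) / 2 - n / 4 + 1 / 4 - 6 * (1 / 256) * n)
      ≤ dp * dm * ((3 * n - 3) / 4) - dm * ((dp * dp - dp) / 2 + c2 + c1 + SR)
        - dp * (c2 + X2 + (n - dp - dm + c1) * dm + (dm * dm - dm) / 2)
        - n * (n * (n / 16777216)) - (c1 * (dp + dm) + c2) * (3 * n / 4) := by
    linarith [hmain, hdmSR, j1, j2, j3, j4, hnn, hnnn]
  have hfin : dp * dm * ((dp + dm) / 2 - n / 4 + 1 / 4 - 6 * (1 / 256) * n) ≤ dp * dm * a := by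
    linarith
  exact le_of_mul_le_mul_left (by linarith [hfin]) (mul_pos hdp0 hdm0)

open scoped Classical in
theorem key (E : V → V → Prop) [DecidableRel E]
    (n : ℕ) (hn : Fintype.card V = n) (hor : Oriented E)
    (hOre : ∀ x y : V, x ≠ y → ¬ E x y →
      ((degPlus E x : ℝ) + (degMinus E y : ℝ)) ≥ (3 * n - 3) / 4)
    (u v : V) (huv : u ≠ v) (hne : ¬ E u v)
    (h1 : (oneConnectors E u v : ℝ) < (2 : ℝ) ^ (-24 : ℤ) * n)
    (h2 : (twoConnectors E u v : ℝ) < (2 : ℝ) ^ (-24 : ℤ) * (n : ℝ) ^ 2)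
    (h3 : (threeConnectors E u v : ℝ) < (2 : ℝ) ^ (-24 : ℤ) * (n : ℝ) ^ 3)
    (A : Finset V)
    (hA : ∀ w : V, w ∈ A ↔ (¬ E u w ∧
      ((univ.filter fun z : V => E u z ∧ E z w).card : ℝ) ≥ (2 : ℝ) ^ (-8 : ℤ) * n)) :
    5 ≤ n ∧
    ((A.card : ℝ) ≥ (3 * n - 3) / 4 - (degMinus E v : ℝ) - ((degPlus E u : ℝ) - 1) / 2
        - 6 * (1 / 256) * n) ∧
    ((A.card : ℝ) ≥ ((degPlus E u : ℝ) + (degMinus E v : ℝ)) / 2 - (n : ℝ) / 4 + 1 / 4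
        - 6 * (1 / 256) * n) ∧
    (n ≤ 255 →
      ((A.card : ℝ) ≥ (3 * n - 3) / 4 - (degMinus E v : ℝ) - ((degPlus E u : ℝ) - 1) / 2) ∧
      ((A.card : ℝ) ≥ ((degPlus E u : ℝ) + (degMinus E v : ℝ)) / 2 - (n : ℝ) / 4 + 1 / 4)) := by
  classical
  -- ## basic setup
  have hnpos : 0 < n := by rw [← hn]; exact Fintype.card_pos_iff.2 ⟨u⟩
  have hn2 : 2 ≤ n := by
    rw [← hn]; exact Fintype.one_lt_card_iff_nontrivial.2 ⟨u, v, huv⟩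
  have hnR : (0:ℝ) < n := by exact_mod_cast hnpos
  have hpow8 : (2 : ℝ) ^ (-8 : ℤ) = 1 / 256 := by norm_num
  have hpow24 : (2 : ℝ) ^ (-24 : ℤ) = 1 / 16777216 := by norm_num
  set S : Finset V := univ.filter (fun y => E u y) with hS
  set T : Finset V := univ.filter (fun w => E w v) with hT
  have hdegp : degPlus E u = S.card := rfl
  have hdegm : degMinus E v = T.card := rfl
  have hA' : ∀ w : V, w ∈ A ↔ (¬ E u w ∧
      ((univ.filter fun z : V => E u z ∧ E z w).card : ℝ) ≥ (n:ℝ) / 256) := by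
    intro w; rw [hA w, hpow8]; constructor <;> exact fun ⟨h, h'⟩ => ⟨h, by linarith⟩
  have hmemS : ∀ w, w ∈ S ↔ E u w := by intro w; simp [hS]
  have hmemT : ∀ w, w ∈ T ↔ E w v := by intro w; simp [hT]
  have huS : u ∉ S := by rw [hmemS]; exact hor.1 u
  have hvS : v ∉ S := by rw [hmemS]; exact hne
  have huT : u ∉ T := by rw [hmemT]; exact hne
  have hvT : v ∉ T := by rw [hmemT]; exact hor.1 v
  -- one-connectors = S ∩ T
  have hSTfin : S ∩ T = univ.filter (fun w : V => w ≠ u ∧ w ≠ v ∧ E u w ∧ E w v) := by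
    ext w
    simp only [mem_inter, hmemS w, hmemT w, mem_filter, mem_univ, true_and]
    constructor
    · rintro ⟨h1, h2⟩
      exact ⟨fun hh => hor.1 u (hh ▸ h1), fun hh => hor.1 v (hh ▸ h2), h1, h2⟩
    · rintro ⟨_, _, h1, h2⟩; exact ⟨h1, h2⟩
  have hc1eq : (S ∩ T).card = oneConnectors E u v := by rw [hSTfin]; rfl
  -- real quantity bounds from h1-h3
  have hc1R : ((S ∩ T).card : ℝ) ≤ (n:ℝ) / 16777216 := by
    rw [hc1eq]; rw [hpow24] at h1; linarith
  have hc2R : (twoConnectors E u v : ℝ) ≤ (n:ℝ) * n / 16777216 := by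
    rw [hpow24] at h2; push_cast at h2 ⊢; nlinarith [h2]
  have hc3R : (threeConnectors E u v : ℝ) ≤ (n:ℝ) * n * n / 16777216 := by
    rw [hpow24] at h3; push_cast at h3 ⊢; nlinarith [h3]
  -- A membership exclusions
  have huA : u ∉ A := by
    rw [hA' u]
    rintro ⟨-, hcard⟩
    have hempty : (univ.filter fun z : V => E u z ∧ E z u) = ∅ := by
      ext z; simp only [mem_filter, mem_univ, true_and, notMem_empty, iff_false]
      rintro ⟨hz1, hz2⟩; exact hor.2 u z hz1 hz2
    rw [hempty] at hcard
    simp only [card_empty, Nat.cast_zero] at hcard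
    linarith
  have hfiltv : (univ.filter fun z : V => E u z ∧ E z v) = S ∩ T := by
    ext z; simp only [mem_filter, mem_univ, true_and, mem_inter, hmemS z, hmemT z]
  have hvA : v ∉ A := by
    rw [hA' v]
    rintro ⟨-, hcard⟩
    rw [hfiltv] at hcard
    have : (n:ℝ)/16777216 < (n:ℝ)/256 := by
      have : (0:ℝ) < n := hnR
      linarith
    linarith [hc1R]
  have hSA : Disjoint S A := by
    rw [Finset.disjoint_left]
    intro w hw hw2
    exact ((hA' w).1 hw2).1 ((hmemS w).1 hw)
  -- partition pieces
  set D : Finset V := T \ (S ∪ A) with hD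
  set R : Finset V := univ \ (S ∪ A ∪ T) with hR
  have hdisjSAD : Disjoint (S ∪ A) D := disjoint_sdiff
  have hdisjR : Disjoint ((S ∪ A) ∪ D) R := by
    have : (S ∪ A) ∪ D ⊆ S ∪ A ∪ T := by
      intro w hw
      rcases mem_union.1 hw with h | h
      · rcases mem_union.1 h with h' | h'
        · exact mem_union.2 (Or.inl (mem_union.2 (Or.inl h')))
        · exact mem_union.2 (Or.inl (mem_union.2 (Or.inr h')))
      · exact mem_union.2 (Or.inr ((mem_sdiff.1 h).1))
    exact Finset.disjoint_of_subset_left this disjoint_sdiff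
  have huniv : ((S ∪ A) ∪ D) ∪ R = univ := by
    rw [hD, hR]
    rw [union_sdiff_self_eq_union]
    rw [show S ∪ A ∪ T = S ∪ A ∪ T from rfl]
    exact union_sdiff_of_subset (subset_univ _)
  have hsplitR : ∀ f : V → ℝ, ∑ y ∈ univ, f y
      = ((∑ y ∈ S, f y + ∑ y ∈ A, f y) + ∑ y ∈ D, f y) + ∑ y ∈ R, f y := by
    intro f
    rw [← huniv, sum_union hdisjR, sum_union hdisjSAD, sum_union hSA]

  have huR : u ∈ R := by
    rw [hR, mem_sdiff]
    refine ⟨mem_univ _, fun hmem => ?_⟩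
    rcases mem_union.1 hmem with h | h
    · rcases mem_union.1 h with h' | h'
      · exact huS h'
      · exact huA h'
    · exact huT h
  have hvR : v ∈ R := by
    rw [hR, mem_sdiff]
    refine ⟨mem_univ _, fun hmem => ?_⟩
    rcases mem_union.1 hmem with h | h
    · rcases mem_union.1 h with h' | h'
      · exact hvS h'
      · exact hvA h'
    · exact hvT h
  set R' : Finset V := R \ {u, v} with hR'
  have hmemR' : ∀ y, y ∈ R' ↔ (y ∈ R ∧ y ≠ u ∧ y ≠ v) := by
    intro y
    rw [hR', mem_sdiff, mem_insert, mem_singleton]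
    tauto
  have huR' : u ∉ R' := fun h => ((hmemR' u).1 h).2.1 rfl
  have hvR' : v ∉ R' := fun h => ((hmemR' v).1 h).2.2 rfl
  have hRins : R = insert u (insert v R') := by
    ext w
    simp only [mem_insert]
    constructor
    · intro hw
      by_cases h1 : w = u
      · exact Or.inl h1
      by_cases h2 : w = v
      · exact Or.inr (Or.inl h2)
      exact Or.inr (Or.inr ((hmemR' w).2 ⟨hw, h1, h2⟩))
    · rintro (rfl | rfl | hw)
      · exact huR
      · exact hvR
      · exact ((hmemR' w).1 hw).1
  have hvins : v ∉ insert v R' → False := fun h => h (mem_insert_self _ _)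
  have huvR' : u ∉ insert v R' := by
    rw [mem_insert]
    rintro (h | h)
    · exact huv h
    · exact huR' h
  -- cardinality relations
  have hunSTcard : (S ∪ T).card + (S ∩ T).card = S.card + T.card := card_union_add_card_inter S T
  have huSUT : u ∉ S ∪ T := fun h => (mem_union.1 h).elim (fun h' => huS h') (fun h' => huT h')
  have hvSUT : v ∉ S ∪ T := fun h => (mem_union.1 h).elim (fun h' => hvS h') (fun h' => hvT h')
  have huvSUT : u ∉ insert v (S ∪ T) := by
    rw [mem_insert]; rintro (h | h)
    · exact huv h
    · exact huSUT h
  have hins2 : (insert u (insert v (S ∪ T))).card = (S ∪ T).card + 2 := by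
    rw [card_insert_of_notMem huvSUT, card_insert_of_notMem hvSUT]
  have hinsle : (S ∪ T).card + 2 ≤ n := by
    rw [← hins2, ← hn]; exact card_le_univ _
  have hdub : (S.card : ℝ) + T.card ≤ (n:ℝ) - 2 + ((S ∩ T).card : ℝ) := by
    have e1 : ((S ∪ T).card : ℝ) + ((S ∩ T).card : ℝ) = (S.card : ℝ) + T.card := by
      exact_mod_cast hunSTcard
    have e2 : ((S ∪ T).card : ℝ) + 2 ≤ (n:ℝ) := by exact_mod_cast hinsle
    linarith
  have hdisjR' : Disjoint R' (insert u (insert v (S ∪ T))) := by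
    rw [Finset.disjoint_left]
    intro w hw hw2
    obtain ⟨hwR, hwu, hwv⟩ := (hmemR' w).1 hw
    rw [hR, mem_sdiff] at hwR
    rw [mem_insert, mem_insert] at hw2
    rcases hw2 with h | h | h
    · exact hwu h
    · exact hwv h
    · rcases mem_union.1 h with h' | h'
      · exact hwR.2 (mem_union.2 (Or.inl (mem_union.2 (Or.inl h'))))
      · exact hwR.2 (mem_union.2 (Or.inr h'))
  have hR'bound : (R'.card : ℝ) ≤ (n:ℝ) - 2 - (S.card:ℝ) - T.card + ((S∩T).card : ℝ) := by
    have h := card_le_univ (R' ∪ insert u (insert v (S ∪ T)))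
    rw [card_union_of_disjoint hdisjR', hins2, hn] at h
    have h' : (R'.card : ℝ) + (((S ∪ T).card : ℝ) + 2) ≤ (n : ℝ) := by exact_mod_cast h
    have e1 : ((S ∪ T).card : ℝ) + ((S ∩ T).card : ℝ) = (S.card : ℝ) + T.card := by
      exact_mod_cast hunSTcard
    linarith
  have hRcard : (R.card : ℝ) = (R'.card : ℝ) + 2 := by
    rw [hRins, card_insert_of_notMem huvR', card_insert_of_notMem hvR']
    push_cast; ring
  -- ## out-edges of S
  have hcommS : ∑ x ∈ S, (degPlus E x) = ∑ y ∈ univ, (S.filter (fun x => E x y)).card := by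
    exact sum_card_comm S univ E
  have b1 : 2 * (∑ y ∈ S, (S.filter (fun x => E x y)).card) ≤ S.card * S.card - S.card := by
    rw [← sum_card_comm S S E, ← pairs_card S S E]
    exact half_bound hor S
  have b2 : ∑ y ∈ A, (S.filter (fun x => E x y)).card ≤ A.card * S.card := by
    calc ∑ y ∈ A, (S.filter (fun x => E x y)).card ≤ ∑ _y ∈ A, S.card :=
          sum_le_sum (fun y _ => card_le_card (filter_subset _ _))
      _ = A.card * S.card := by rw [sum_const, smul_eq_mul]
  have b3 : ∑ y ∈ D, (S.filter (fun x => E x y)).card ≤ twoConnectors E u v := by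
    rw [← sum_card_comm S D E, ← pairs_card S D E]
    apply card_le_card
    intro p hp
    rw [mem_filter, mem_product] at hp
    obtain ⟨⟨hp1, hp2⟩, hpe⟩ := hp
    have hp1S : E u p.1 := (hmemS p.1).1 hp1
    rw [hD, mem_sdiff] at hp2
    have hp2T : E p.2 v := (hmemT p.2).1 hp2.1
    have hp2nS : p.2 ∉ S := fun hh => hp2.2 (mem_union.2 (Or.inl hh))
    rw [mem_filter]
    refine ⟨by simp, ?_, ?_, ?_, ?_, ?_, hp1S, hpe, hp2T⟩
    · intro hh; rw [← hh] at hp2nS; exact hp2nS hp1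
    · intro hh; rw [hh] at hp1S; exact hor.1 u hp1S
    · intro hh; rw [hh] at hp1S; exact hne hp1S
    · intro hh; rw [hh] at hp2T; exact hne hp2T
    · intro hh; rw [hh] at hp2T; exact hor.1 v hp2T
  have fu : (S.filter (fun x => E x u)).card = 0 := by
    rw [card_eq_zero]
    ext x; simp only [mem_filter, notMem_empty, iff_false]
    rintro ⟨hx, hxu⟩
    exact hor.2 u x ((hmemS x).1 hx) hxu
  have fv : (S.filter (fun x => E x v)).card ≤ (S ∩ T).card := by
    apply card_le_card
    intro x hx
    rw [mem_filter] at hx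
    exact mem_inter.2 ⟨hx.1, (hmemT x).2 hx.2⟩
  have hfyR' : ∀ y ∈ R', ((S.filter (fun x => E x y)).card : ℝ) < (n:ℝ)/256 := by
    intro y hy
    obtain ⟨hyR, hyu, hyv⟩ := (hmemR' y).1 hy
    rw [hR, mem_sdiff] at hyR
    have hynS : y ∉ S := fun hh => hyR.2 (mem_union.2 (Or.inl (mem_union.2 (Or.inl hh))))
    have hynA : y ∉ A := fun hh => hyR.2 (mem_union.2 (Or.inl (mem_union.2 (Or.inr hh))))
    have hnEuy : ¬ E u y := fun hh => hynS ((hmemS y).2 hh)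
    have hfeq : S.filter (fun x => E x y) = univ.filter (fun z => E u z ∧ E z y) := by
      ext z
      simp only [mem_filter, mem_univ, true_and]
      constructor
      · rintro ⟨hz1, hz2⟩; exact ⟨(hmemS z).1 hz1, hz2⟩
      · rintro ⟨hz1, hz2⟩; exact ⟨(hmemS z).2 hz1, hz2⟩
    rw [hfeq]
    by_contra hcon
    push_neg at hcon
    exact hynA ((hA' y).2 ⟨hnEuy, hcon⟩)
  set SR : ℝ := ∑ y ∈ R', ((S.filter (fun x => E x y)).card : ℝ) with hSRdef
  have hSR0 : 0 ≤ SR := sum_nonneg (fun _ _ => Nat.cast_nonneg _)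
  have hSRle : SR ≤ (n:ℝ)/256 * R'.card := by
    calc SR ≤ ∑ _y ∈ R', (n:ℝ)/256 := sum_le_sum (fun y hy => (hfyR' y hy).le)
      _ = R'.card * ((n:ℝ)/256) := by rw [sum_const, nsmul_eq_mul]
      _ = _ := by ring
  have hSR : SR ≤ (n:ℝ)/256 * ((n:ℝ) - (S.card:ℝ) - T.card + ((S∩T).card:ℝ) - 2) := by
    have h := mul_le_mul_of_nonneg_left
      (show (R'.card : ℝ) ≤ (n:ℝ) - (S.card:ℝ) - T.card + ((S∩T).card:ℝ) - 2 by linarith [hR'bound])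
      (show (0:ℝ) ≤ (n:ℝ)/256 by positivity)
    linarith only [h, hSRle]
  have hSRsmall : n ≤ 255 → SR = 0 := by
    intro hsmall
    apply sum_eq_zero
    intro y hy
    have h := hfyR' y hy
    have hn255 : (n:ℝ) ≤ 255 := by exact_mod_cast hsmall
    have hlt1 : ((S.filter (fun x => E x y)).card : ℝ) < 1 := by linarith
    have : (S.filter (fun x => E x y)).card = 0 := by exact_mod_cast Nat.lt_one_iff.1 (by exact_mod_cast hlt1)
    simp [this]
  have hsumRle : ∑ y ∈ R, ((S.filter (fun x => E x y)).card : ℝ) ≤ ((S∩T).card : ℝ) + SR := by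
    rw [hRins, sum_insert huvR', sum_insert hvR']
    rw [fu]
    have hfvR : ((S.filter (fun x => E x v)).card : ℝ) ≤ ((S∩T).card:ℝ) := by exact_mod_cast fv
    simp only [Nat.cast_zero]
    linarith only [hfvR]
  have hU1 : ∑ x ∈ S, ((degPlus E x : ℝ))
      ≤ ((S.card:ℝ) * S.card - S.card)/2 + (S.card:ℝ) * A.card
        + (twoConnectors E u v : ℝ) + ((S∩T).card : ℝ) + SR := by
    have hc : ∑ x ∈ S, ((degPlus E x : ℝ)) = ∑ y ∈ univ, ((S.filter (fun x => E x y)).card : ℝ) := by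
      exact_mod_cast congrArg (Nat.cast : ℕ → ℝ) hcommS
    rw [hc, hsplitR (fun y => ((S.filter (fun x => E x y)).card : ℝ))]
    have hb1R : ∑ y ∈ S, ((S.filter (fun x => E x y)).card : ℝ)
        ≤ ((S.card:ℝ) * S.card - S.card)/2 := by
      have := half_real b1
      push_cast at this ⊢
      linarith [this]
    have hb2R : ∑ y ∈ A, ((S.filter (fun x => E x y)).card : ℝ) ≤ (S.card:ℝ) * A.card := by
      have : (∑ y ∈ A, (S.filter (fun x => E x y)).card : ℝ) ≤ ((A.card * S.card : ℕ) : ℝ) := by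
        exact_mod_cast b2
      push_cast at this ⊢
      linarith
    have hb3R : ∑ y ∈ D, ((S.filter (fun x => E x y)).card : ℝ) ≤ (twoConnectors E u v : ℝ) := by
      exact_mod_cast b3
    push_cast
    push_cast at hb1R hb2R hb3R hsumRle
    linarith only [hb1R, hb2R, hb3R, hsumRle]

  -- ## in-edges of T
  have hcommT : ∑ y ∈ T, (degMinus E y) = ∑ x ∈ univ, (T.filter (fun y => E x y)).card :=
    (sum_card_comm univ T E).symm
  have s1 : ∑ x ∈ S, (T.filter (fun y => E x y)).card ≤ twoConnectors E u v := by
    rw [← pairs_card S T E]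
    apply card_le_card
    intro p hp
    rw [mem_filter, mem_product] at hp
    obtain ⟨⟨hp1, hp2⟩, hpe⟩ := hp
    have hp1S : E u p.1 := (hmemS p.1).1 hp1
    have hp2T : E p.2 v := (hmemT p.2).1 hp2
    rw [mem_filter]
    refine ⟨by simp, ?_, ?_, ?_, ?_, ?_, hp1S, hpe, hp2T⟩
    · intro hh; rw [hh] at hpe; exact hor.1 p.2 hpe
    · intro hh; rw [hh] at hp1S; exact hor.1 u hp1S
    · intro hh; rw [hh] at hp1S; exact hne hp1S
    · intro hh; rw [hh] at hp2T; exact hne hp2T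
    · intro hh; rw [hh] at hp2T; exact hor.1 v hp2T
  have hTsplit : ∀ x : V, (T.filter (fun y => E x y)).card
      = ((T \ S).filter (fun y => E x y)).card + ((T ∩ S).filter (fun y => E x y)).card := by
    intro x
    rw [← card_union_of_disjoint
      (Disjoint.mono (filter_subset _ _) (filter_subset _ _) (disjoint_sdiff_inter T S)),
      ← filter_union, sdiff_union_inter]
  have s2a : ∑ x ∈ A, ((T ∩ S).filter (fun y => E x y)).card ≤ A.card * (S ∩ T).card := by
    calc ∑ x ∈ A, ((T ∩ S).filter (fun y => E x y)).card ≤ ∑ _x ∈ A, (T ∩ S).card :=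
          sum_le_sum (fun x _ => card_le_card (filter_subset _ _))
      _ = A.card * (T ∩ S).card := by rw [sum_const, smul_eq_mul]
      _ = A.card * (S ∩ T).card := by rw [inter_comm]
  set X2 : ℕ := ((A ×ˢ (T \ S)).filter (fun p => E p.1 p.2)).card with hX2def
  have s2b : ∑ x ∈ A, ((T \ S).filter (fun y => E x y)).card = X2 :=
    (pairs_card A (T \ S) E).symm
  -- triple count
  set Q3 : Finset (V × V × V) := (univ ×ˢ univ ×ˢ univ).filter
      (fun q => E u q.1 ∧ E q.1 q.2.1 ∧ q.2 ∈ (A ×ˢ (T \ S)).filter (fun p => E p.1 p.2))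
      with hQ3def
  have hQ3card : Q3.card = ∑ p ∈ (A ×ˢ (T \ S)).filter (fun p => E p.1 p.2),
      (univ.filter (fun z => E u z ∧ E z p.1)).card := by
    rw [card_eq_sum_card_fiberwise (f := fun q : V × V × V => q.2)
      (t := (A ×ˢ (T \ S)).filter (fun p => E p.1 p.2))]
    · apply sum_congr rfl
      intro p hp
      apply card_bij' (i := fun q (_ : q ∈ Q3.filter (fun q => q.2 = p)) => q.1)
        (j := fun z (_ : z ∈ univ.filter (fun z => E u z ∧ E z p.1)) => ((z, p) : V × V × V))
      · intro q hq
        rw [mem_filter] at hq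
        obtain ⟨hq1, hq2⟩ := hq
        rw [hQ3def, mem_filter] at hq1
        rw [mem_filter]
        refine ⟨mem_univ _, hq1.2.1, ?_⟩
        have := hq1.2.2.1
        rw [hq2] at this
        exact this
      · intro z hz
        rw [mem_filter] at hz
        rw [mem_filter, hQ3def, mem_filter]
        exact ⟨⟨by simp, hz.2.1, hz.2.2, hp⟩, rfl⟩
      · intro q hq
        rw [mem_filter] at hq
        rw [← hq.2]
      · intro z _
        rfl
    · intro q hq
      rw [hQ3def, mem_coe, mem_filter] at hq
      exact hq.2.2.2
  have hQ3sub : Q3.card ≤ threeConnectors E u v := by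
    apply card_le_card
    intro q hq
    rw [hQ3def, mem_filter] at hq
    obtain ⟨-, hq1, hq2, hq3⟩ := hq
    rw [mem_filter, mem_product] at hq3
    obtain ⟨⟨hqA, hqTS⟩, hqE⟩ := hq3
    rw [mem_sdiff] at hqTS
    have hq4 : E q.2.2 v := (hmemT q.2.2).1 hqTS.1
    have hq22nS : q.2.2 ∉ S := hqTS.2
    rw [mem_filter]
    refine ⟨by simp, ?_, ?_, ?_, ?_, ?_, ?_, ?_, ?_, ?_, hq1, hq2, hqE, hq4⟩
    · intro hh; rw [hh] at hq2; exact hor.1 q.2.1 hq2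
    · intro hh; rw [← hh] at hq22nS; exact hq22nS ((hmemS q.1).2 hq1)
    · intro hh; rw [hh] at hqE; exact hor.1 q.2.2 hqE
    · intro hh; rw [hh] at hq1; exact hor.1 u hq1
    · intro hh; rw [hh] at hq1; exact hne hq1
    · intro hh; rw [hh] at hqA; exact huA hqA
    · intro hh; rw [hh] at hqA; exact hvA hqA
    · intro hh; rw [hh] at hq4; exact hne hq4
    · intro hh; rw [hh] at hq4; exact hor.1 v hq4
  have hX2R : (n:ℝ)/256 * (X2:ℝ) ≤ (threeConnectors E u v : ℝ) := by
    have hlow : ∀ p ∈ (A ×ˢ (T \ S)).filter (fun p => E p.1 p.2),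
        (n:ℝ)/256 ≤ ((univ.filter (fun z => E u z ∧ E z p.1)).card : ℝ) := by
      intro p hp
      rw [mem_filter, mem_product] at hp
      exact ((hA' p.1).1 hp.1.1).2
    have hc : (n:ℝ)/256 * (X2:ℝ)
        ≤ ∑ p ∈ (A ×ˢ (T \ S)).filter (fun p => E p.1 p.2),
            ((univ.filter (fun z => E u z ∧ E z p.1)).card : ℝ) := by
      calc (n:ℝ)/256 * (X2:ℝ)
          = ∑ _p ∈ (A ×ˢ (T \ S)).filter (fun p => E p.1 p.2), (n:ℝ)/256 := by
            rw [sum_const, nsmul_eq_mul, hX2def]; ring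
        _ ≤ _ := sum_le_sum hlow
    have hc2' : (∑ p ∈ (A ×ˢ (T \ S)).filter (fun p => E p.1 p.2),
        ((univ.filter (fun z => E u z ∧ E z p.1)).card : ℝ)) = (Q3.card : ℝ) := by
      rw [hQ3card]; push_cast; rfl
    have hc3' : (Q3.card : ℝ) ≤ (threeConnectors E u v : ℝ) := by exact_mod_cast hQ3sub
    linarith
  have s3 : ∑ x ∈ D, (T.filter (fun y => E x y)).card
      ≤ ∑ x ∈ T, (T.filter (fun y => E x y)).card := by
    apply sum_le_sum_of_subset
    rw [hD]
    exact sdiff_subset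
  have s3b : 2 * ∑ x ∈ T, (T.filter (fun y => E x y)).card ≤ T.card * T.card - T.card := by
    rw [← pairs_card T T E]
    exact half_bound hor T
  have s4 : ∑ x ∈ R, (T.filter (fun y => E x y)).card ≤ R.card * T.card := by
    calc ∑ x ∈ R, (T.filter (fun y => E x y)).card ≤ ∑ _x ∈ R, T.card :=
          sum_le_sum (fun x _ => card_le_card (filter_subset _ _))
      _ = R.card * T.card := by rw [sum_const, smul_eq_mul]
  have hRcardBound : (R.card : ℝ) ≤ (n:ℝ) - S.card - T.card + ((S∩T).card:ℝ) := by
    rw [hRcard]; linarith [hR'bound]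
  have hU2 : ∑ y ∈ T, (degMinus E y : ℝ)
      ≤ (twoConnectors E u v : ℝ) + (A.card:ℝ) * ((S∩T).card:ℝ) + (X2:ℝ)
        + ((n:ℝ) - S.card - T.card + ((S∩T).card:ℝ)) * T.card
        + ((T.card:ℝ) * T.card - T.card)/2 := by
    have hc : ∑ y ∈ T, (degMinus E y : ℝ)
        = ∑ x ∈ univ, ((T.filter (fun y => E x y)).card : ℝ) := by
      exact_mod_cast congrArg (Nat.cast : ℕ → ℝ) hcommT
    rw [hc, hsplitR (fun x => ((T.filter (fun y => E x y)).card : ℝ))]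
    have hs1R : ∑ x ∈ S, ((T.filter (fun y => E x y)).card : ℝ)
        ≤ (twoConnectors E u v : ℝ) := by exact_mod_cast s1
    have hs2R : ∑ x ∈ A, ((T.filter (fun y => E x y)).card : ℝ)
        ≤ (X2:ℝ) + (A.card:ℝ) * ((S∩T).card:ℝ) := by
      have h := s2a
      have heq : ∑ x ∈ A, (T.filter (fun y => E x y)).card
          = (∑ x ∈ A, ((T \ S).filter (fun y => E x y)).card)
            + ∑ x ∈ A, ((T ∩ S).filter (fun y => E x y)).card := by
        rw [← sum_add_distrib]
        exact sum_congr rfl (fun x _ => hTsplit x)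
      have : ∑ x ∈ A, (T.filter (fun y => E x y)).card ≤ X2 + A.card * (S ∩ T).card := by
        rw [heq, s2b]; omega
      exact_mod_cast this
    have hs3R : ∑ x ∈ D, ((T.filter (fun y => E x y)).card : ℝ)
        ≤ ((T.card:ℝ) * T.card - T.card)/2 := by
      have h1 : (∑ x ∈ D, (T.filter (fun y => E x y)).card : ℝ)
          ≤ (∑ x ∈ T, (T.filter (fun y => E x y)).card : ℝ) := by exact_mod_cast s3
      have h2 := half_real s3b
      push_cast at h1 h2 ⊢
      linarith only [h1, h2]
    have hs4R : ∑ x ∈ R, ((T.filter (fun y => E x y)).card : ℝ)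
        ≤ ((n:ℝ) - S.card - T.card + ((S∩T).card:ℝ)) * T.card := by
      have h1 : (∑ x ∈ R, (T.filter (fun y => E x y)).card : ℝ) ≤ (R.card:ℝ) * T.card := by
        exact_mod_cast s4
      have h2 := mul_le_mul_of_nonneg_right hRcardBound (show (0:ℝ) ≤ T.card from Nat.cast_nonneg _)
      push_cast at h1 ⊢
      linarith only [h1, h2]
    push_cast at hs2R ⊢
    linarith only [hs1R, hs2R, hs3R, hs4R]
  -- ## lower bound for out-edges of S (Ore)
  have hF6 : ((S.card:ℝ) - ((S∩T).card:ℝ)) * max 0 ((3*(n:ℝ)-3)/4 - (T.card:ℝ))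
      ≤ ∑ x ∈ S, (degPlus E x : ℝ) := by
    have hcardST : (S \ T).card + (S ∩ T).card = S.card := card_sdiff_add_card_inter S T
    have hlow : ∀ x ∈ S \ T, max 0 ((3*(n:ℝ)-3)/4 - (T.card:ℝ)) ≤ (degPlus E x : ℝ) := by
      intro x hx
      rw [mem_sdiff] at hx
      have hxv : x ≠ v := fun hh => hvS (hh ▸ hx.1)
      have hxnE : ¬ E x v := fun hh => hx.2 ((hmemT x).2 hh)
      have ho := hOre x v hxv hxnE
      rw [hdegm] at ho
      exact max_le (by positivity) (by linarith only [ho])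
    have h1 := Finset.card_nsmul_le_sum (S \ T) (fun x => (degPlus E x : ℝ)) _ hlow
    rw [nsmul_eq_mul] at h1
    have h2 : ∑ x ∈ S \ T, (degPlus E x : ℝ) ≤ ∑ x ∈ S, (degPlus E x : ℝ) :=
      sum_le_sum_of_subset_of_nonneg sdiff_subset (fun _ _ _ => by positivity)
    have h3 : ((S \ T).card : ℝ) = (S.card:ℝ) - ((S∩T).card:ℝ) := by
      have := hcardST
      push_cast [← this]
      ring
    rw [h3] at h1
    linarith only [h1, h2]
  -- ## the pair sum (Ore over S' × T')
  have hT'card : ((T \ S).card : ℝ) = (T.card:ℝ) - ((S∩T).card:ℝ) := by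
    have h := card_sdiff_add_card_inter T S
    rw [inter_comm] at h
    push_cast [← h]
    ring
  have hS'card : ((S \ T).card : ℝ) = (S.card:ℝ) - ((S∩T).card:ℝ) := by
    have h := card_sdiff_add_card_inter S T
    push_cast [← h]
    ring
  have hPc : (((S \ T) ×ˢ (T \ S)).filter (fun p => E p.1 p.2)).card ≤ twoConnectors E u v := by
    apply card_le_card
    intro p hp
    rw [mem_filter, mem_product] at hp
    obtain ⟨⟨hp1, hp2⟩, hpe⟩ := hp
    rw [mem_sdiff] at hp1 hp2
    have hp1S : E u p.1 := (hmemS p.1).1 hp1.1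
    have hp2T : E p.2 v := (hmemT p.2).1 hp2.1
    rw [mem_filter]
    refine ⟨by simp, ?_, ?_, ?_, ?_, ?_, hp1S, hpe, hp2T⟩
    · intro hh; rw [hh] at hpe; exact hor.1 p.2 hpe
    · intro hh; rw [hh] at hp1S; exact hor.1 u hp1S
    · intro hh; rw [hh] at hp1S; exact hne hp1S
    · intro hh; rw [hh] at hp2T; exact hne hp2T
    · intro hh; rw [hh] at hp2T; exact hor.1 v hp2T
  set P : Finset (V × V) := ((S \ T) ×ˢ (T \ S)).filter (fun p => ¬ E p.1 p.2) with hPdef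
  have hPcard : (((S \ T) ×ˢ (T \ S)).filter (fun p => E p.1 p.2)).card + P.card
      = (S \ T).card * (T \ S).card := by
    rw [hPdef, card_filter_add_card_filter_not, card_product]
  have hOreP : ∀ p ∈ P, ((3*(n:ℝ)-3)/4) ≤ (degPlus E p.1 : ℝ) + (degMinus E p.2 : ℝ) := by
    intro p hp
    rw [hPdef, mem_filter, mem_product] at hp
    obtain ⟨⟨hp1, hp2⟩, hpe⟩ := hp
    rw [mem_sdiff] at hp1 hp2
    have hne' : p.1 ≠ p.2 := fun hh => hp2.2 (hh ▸ hp1.1)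
    exact hOre p.1 p.2 hne' hpe
  have hA3a : (P.card : ℝ) * ((3*(n:ℝ)-3)/4)
      ≤ ∑ p ∈ P, ((degPlus E p.1 : ℝ) + (degMinus E p.2 : ℝ)) := by
    have h := Finset.card_nsmul_le_sum P
      (fun p => (degPlus E p.1 : ℝ) + (degMinus E p.2 : ℝ)) ((3*(n:ℝ)-3)/4) hOreP
    rw [nsmul_eq_mul] at h
    exact h
  have hsp1 : ∑ p ∈ P, (degPlus E p.1 : ℝ)
      ≤ ((T \ S).card : ℝ) * ∑ x ∈ S, (degPlus E x : ℝ) := by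
    have h1 : ∑ p ∈ P, (degPlus E p.1 : ℝ)
        ≤ ∑ p ∈ (S \ T) ×ˢ (T \ S), (degPlus E p.1 : ℝ) :=
      sum_le_sum_of_subset_of_nonneg (filter_subset _ _) (fun _ _ _ => by positivity)
    have h2 : ∑ p ∈ (S \ T) ×ˢ (T \ S), (degPlus E p.1 : ℝ)
        = ((T \ S).card : ℝ) * ∑ x ∈ S \ T, (degPlus E x : ℝ) := by
      rw [Finset.sum_product]
      dsimp only
      simp only [sum_const, nsmul_eq_mul]
      rw [← Finset.mul_sum]
    have h3 : ∑ x ∈ S \ T, (degPlus E x : ℝ) ≤ ∑ x ∈ S, (degPlus E x : ℝ) :=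
      sum_le_sum_of_subset_of_nonneg sdiff_subset (fun _ _ _ => by positivity)
    have h4 := mul_le_mul_of_nonneg_left h3 (show (0:ℝ) ≤ ((T \ S).card : ℝ) from Nat.cast_nonneg _)
    linarith only [h1, h2, h3, h4]
  have hsp2 : ∑ p ∈ P, (degMinus E p.2 : ℝ)
      ≤ ((S \ T).card : ℝ) * ∑ y ∈ T, (degMinus E y : ℝ) := by
    have h1 : ∑ p ∈ P, (degMinus E p.2 : ℝ)
        ≤ ∑ p ∈ (S \ T) ×ˢ (T \ S), (degMinus E p.2 : ℝ) :=
      sum_le_sum_of_subset_of_nonneg (filter_subset _ _) (fun _ _ _ => by positivity)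
    have h2 : ∑ p ∈ (S \ T) ×ˢ (T \ S), (degMinus E p.2 : ℝ)
        = ((S \ T).card : ℝ) * ∑ y ∈ T \ S, (degMinus E y : ℝ) := by
      rw [Finset.sum_product]
      dsimp only
      rw [sum_const, nsmul_eq_mul]
    have h3 : ∑ y ∈ T \ S, (degMinus E y : ℝ) ≤ ∑ y ∈ T, (degMinus E y : ℝ) :=
      sum_le_sum_of_subset_of_nonneg sdiff_subset (fun _ _ _ => by positivity)
    have h4 := mul_le_mul_of_nonneg_left h3 (show (0:ℝ) ≤ ((S \ T).card : ℝ) from Nat.cast_nonneg _)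
    linarith only [h1, h2, h3, h4]
  have hQnn : (0:ℝ) ≤ (3*(n:ℝ)-3)/4 := by
    have h : (1:ℝ) ≤ n := by exact_mod_cast hnpos
    linarith only [h]
  have hPQlow : ((S.card:ℝ) - ((S∩T).card:ℝ)) * ((T.card:ℝ) - ((S∩T).card:ℝ))
      - (twoConnectors E u v : ℝ) ≤ (P.card : ℝ) := by
    have hc : ((((S \ T) ×ˢ (T \ S)).filter (fun p => E p.1 p.2)).card : ℝ) + (P.card : ℝ)
        = ((S \ T).card : ℝ) * ((T \ S).card : ℝ) := by exact_mod_cast hPcard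
    have hcle : ((((S \ T) ×ˢ (T \ S)).filter (fun p => E p.1 p.2)).card : ℝ)
        ≤ (twoConnectors E u v : ℝ) := by exact_mod_cast hPc
    rw [hS'card, hT'card] at hc
    linarith only [hc, hcle]
  have hA3 : (((S.card:ℝ) - ((S∩T).card:ℝ)) * ((T.card:ℝ) - ((S∩T).card:ℝ))
        - (twoConnectors E u v : ℝ)) * ((3*(n:ℝ)-3)/4)
      ≤ ((T.card:ℝ) - ((S∩T).card:ℝ)) * (∑ x ∈ S, (degPlus E x : ℝ))
        + ((S.card:ℝ) - ((S∩T).card:ℝ)) * (∑ y ∈ T, (degMinus E y : ℝ)) := by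
    have h0 := mul_le_mul_of_nonneg_right hPQlow hQnn
    have hsplitP : ∑ p ∈ P, ((degPlus E p.1 : ℝ) + (degMinus E p.2 : ℝ))
        = ∑ p ∈ P, (degPlus E p.1 : ℝ) + ∑ p ∈ P, (degMinus E p.2 : ℝ) := by
      rw [sum_add_distrib]
    rw [← hS'card, ← hT'card]
    calc (((S \ T).card : ℝ) * ((T \ S).card : ℝ) - (twoConnectors E u v : ℝ)) * ((3*(n:ℝ)-3)/4)
        ≤ (P.card : ℝ) * ((3*(n:ℝ)-3)/4) := by
          have := mul_le_mul_of_nonneg_right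
            (show ((S\T).card:ℝ) * ((T\S).card:ℝ) - (twoConnectors E u v:ℝ) ≤ (P.card:ℝ) by
              rw [hS'card, hT'card]; exact hPQlow) hQnn
          exact this
      _ ≤ ∑ p ∈ P, ((degPlus E p.1 : ℝ) + (degMinus E p.2 : ℝ)) := hA3a
      _ = _ := hsplitP
      _ ≤ _ := by
          have h := add_le_add hsp1 hsp2
          linarith only [h]
  -- ## global facts
  have hOreUV : ((S.card:ℝ)) + (T.card:ℝ) ≥ (3*(n:ℝ)-3)/4 := by
    have h := hOre u v huv hne
    rw [hdegp, hdegm] at h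
    exact h
  have hc1dp : ((S∩T).card:ℝ) ≤ (S.card:ℝ) := by
    exact_mod_cast card_le_card inter_subset_left
  have hc1dm : ((S∩T).card:ℝ) ≤ (T.card:ℝ) := by
    exact_mod_cast card_le_card inter_subset_right
  have hc10 : (0:ℝ) ≤ ((S∩T).card:ℝ) := Nat.cast_nonneg _
  have hdpn : ((S.card:ℝ)) ≤ (n:ℝ) := by
    exact_mod_cast hn ▸ card_le_univ S
  have hdmn : ((T.card:ℝ)) ≤ (n:ℝ) := by
    exact_mod_cast hn ▸ card_le_univ T
  have han : ((A.card:ℝ)) ≤ (n:ℝ) := by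
    exact_mod_cast hn ▸ card_le_univ A
  have ha0 : (0:ℝ) ≤ (A.card:ℝ) := Nat.cast_nonneg _
  have hsS0 : 0 ≤ ∑ x ∈ S, (degPlus E x : ℝ) := sum_nonneg (fun _ _ => by positivity)
  have hsT0 : 0 ≤ ∑ y ∈ T, (degMinus E y : ℝ) := sum_nonneg (fun _ _ => by positivity)
  have hc20 : (0:ℝ) ≤ (twoConnectors E u v : ℝ) := by positivity
  have hX20 : (0:ℝ) ≤ (X2:ℝ) := Nat.cast_nonneg _
  have hn5 : 5 ≤ n := by
    by_contra hcon
    push_neg at hcon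
    have hn4 : (n:ℝ) ≤ 4 := by exact_mod_cast Nat.lt_succ_iff.1 hcon
    have hlt1 : ((S∩T).card:ℝ) < 1 := by
      linarith only [hc1R, hn4]
    have hz : ((S∩T).card:ℝ) = 0 := by
      exact_mod_cast Nat.lt_one_iff.1 (by exact_mod_cast hlt1)
    linarith only [hOreUV, hdub, hz, hn4]
  have hor' : Oriented (revRel E) := ⟨hor.1, fun x y h => hor.2 y x h⟩
  have hOre' : ∀ x y : V, x ≠ y → ¬ revRel E x y →
      ((degPlus (revRel E) x : ℝ) + (degMinus (revRel E) y : ℝ)) ≥ (3 * n - 3) / 4 := by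
    intro x y hxy hnE
    have h := hOre y x (Ne.symm hxy) hnE
    have e1 : degPlus (revRel E) x = degMinus E x := by
      unfold degPlus degMinus
      exact card_filter_congr' _ _ (fun _ => Iff.rfl)
    have e2 : degMinus (revRel E) y = degPlus E y := by
      unfold degPlus degMinus
      exact card_filter_congr' _ _ (fun _ => Iff.rfl)
    rw [e1, e2]
    linarith only [h]
  have hrevT : degPlus (revRel E) v = T.card := by
    unfold degPlus
    exact card_filter_congr' _ _ (fun _ => Iff.rfl)
  refine ⟨hn5, ?_⟩
  rw [hdegp, hdegm]
  rcases le_or_gt 256 n with hbig | hsmalln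
  · -- large regime
    have hbigR : (256:ℝ) ≤ (n:ℝ) := by exact_mod_cast hbig
    have hdp8 : ((n:ℝ) - 1)/8 ≤ (S.card:ℝ) := by
      have := deg_lb n hn hor hOre u (by omega)
      rw [hdegp] at this
      exact this
    have hdm8' : ((n:ℝ) - 1)/8 ≤ (T.card:ℝ) := by
      have h := deg_lb (E := revRel E) n hn hor' hOre' v (by omega)
      rw [hrevT] at h
      exact h
    have hMle : max 0 ((3*(n:ℝ)-3)/4 - (T.card:ℝ)) ≤ 3*(n:ℝ)/4 := by
      apply max_le (by linarith only [hbigR])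
      have h : (0:ℝ) ≤ (T.card:ℝ) := Nat.cast_nonneg _
      linarith only [h, hbigR]
    have harg1 : (((S.card:ℝ)) - ((S∩T).card:ℝ)) * max 0 ((3*(n:ℝ)-3)/4 - (T.card:ℝ))
        ≤ ((S.card:ℝ) * (S.card:ℝ) - (S.card:ℝ))/2 + (S.card:ℝ) * (A.card:ℝ)
          + (twoConnectors E u v : ℝ) + ((S∩T).card:ℝ) + SR := le_trans hF6 hU1
    have hK1 := arith1 (n:ℝ) (S.card:ℝ) (T.card:ℝ) (A.card:ℝ) ((S∩T).card:ℝ)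
      (twoConnectors E u v : ℝ) SR (max 0 ((3*(n:ℝ)-3)/4 - (T.card:ℝ)))
      hbigR harg1 (le_max_right _ _) (le_max_left _ _) hMle
      hc10 hc1R hc20 hc2R hSR0 hSR hdp8 hdpn (by linarith only [hOreUV]) ha0
    have hX2b : (X2:ℝ) ≤ (n:ℝ)*(n:ℝ)/65536 := by
      have heq : (n:ℝ)*(n:ℝ)*(n:ℝ)/16777216 = ((n:ℝ)/256) * ((n:ℝ)*(n:ℝ)/65536) := by ring
      have h := le_trans hX2R hc3R
      rw [heq] at h
      exact le_of_mul_le_mul_left h (by positivity)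
    have hK2 := arith2 (n:ℝ) (S.card:ℝ) (T.card:ℝ) (A.card:ℝ) ((S∩T).card:ℝ)
      (twoConnectors E u v : ℝ) (X2:ℝ) SR (∑ x ∈ S, (degPlus E x : ℝ))
      (∑ y ∈ T, (degMinus E y : ℝ))
      hbigR hA3 hU1 hU2 hsS0 hsT0 hc10 hc1R hc20 hc2R hX20 hX2b hSR0 hSR
      hdp8 hdm8' hdpn hdmn (by linarith only [hOreUV]) (by linarith only [hdub]) ha0 han hc1dp hc1dm
    exact ⟨hK1, hK2, fun h255 => absurd h255 (by omega)⟩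
  · -- small regime
    have h255 : n ≤ 255 := by omega
    have hn255R : (n:ℝ) ≤ 255 := by exact_mod_cast h255
    have hc1z : ((S∩T).card:ℝ) = 0 := by
      have hlt1 : ((S∩T).card:ℝ) < 1 := by linarith only [hc1R, hn255R, hnR]
      exact_mod_cast Nat.lt_one_iff.1 (by exact_mod_cast hlt1)
    have hc2z : (twoConnectors E u v : ℝ) = 0 := by
      have h2sq : (n:ℝ)*(n:ℝ) ≤ 255*255 := mul_le_mul hn255R hn255R hnR.le (by norm_num)
      have hlt1 : (twoConnectors E u v : ℝ) < 1 := by linarith only [hc2R, h2sq]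
      exact_mod_cast Nat.lt_one_iff.1 (by exact_mod_cast hlt1)
    have hc3z : (threeConnectors E u v : ℝ) = 0 := by
      have h2sq : (n:ℝ)*(n:ℝ) ≤ 255*255 := mul_le_mul hn255R hn255R hnR.le (by norm_num)
      have h3cb : (n:ℝ)*(n:ℝ)*(n:ℝ) ≤ 255*255*255 :=
        mul_le_mul h2sq hn255R hnR.le (by norm_num)
      have hlt1 : (threeConnectors E u v : ℝ) < 1 := by linarith only [hc3R, h3cb]
      exact_mod_cast Nat.lt_one_iff.1 (by exact_mod_cast hlt1)
    have hX2z : (X2:ℝ) = 0 := by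
      have h := hX2R
      rw [hc3z] at h
      have h2 : ((n:ℝ)/256) * (X2:ℝ) ≤ ((n:ℝ)/256) * 0 := by linarith only [h]
      have h3 := le_of_mul_le_mul_left h2 (by positivity : (0:ℝ) < (n:ℝ)/256)
      linarith only [h3, hX20]
    have hSRz : SR = 0 := hSRsmall h255
    have hdp1 : (1:ℝ) ≤ (S.card:ℝ) := by
      have := deg_pos n hn hor hOre u (by omega)
      rw [hdegp] at this
      exact_mod_cast this
    have hdm1R : (1:ℝ) ≤ (T.card:ℝ) := by
      have h := deg_pos (E := revRel E) n hn hor' hOre' v (by omega)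
      rw [hrevT] at h
      exact_mod_cast h
    have hU1z : ∑ x ∈ S, (degPlus E x : ℝ)
        ≤ ((S.card:ℝ) * (S.card:ℝ) - (S.card:ℝ))/2 + (S.card:ℝ) * (A.card:ℝ) := by
      have h := hU1
      rw [hc1z, hc2z, hSRz] at h
      linarith only [h]
    have hU2z : ∑ y ∈ T, (degMinus E y : ℝ)
        ≤ ((n:ℝ) - (S.card:ℝ) - (T.card:ℝ)) * (T.card:ℝ)
          + ((T.card:ℝ) * (T.card:ℝ) - (T.card:ℝ))/2 := by
      have h := hU2
      rw [hc1z, hc2z, hX2z] at h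
      linarith only [h]
    have hK1s : (A.card:ℝ) ≥ (3*(n:ℝ)-3)/4 - (T.card:ℝ) - ((S.card:ℝ)-1)/2 := by
      have h6 := hF6
      rw [hc1z, sub_zero] at h6
      have hMge : (3*(n:ℝ)-3)/4 - (T.card:ℝ) ≤ max 0 ((3*(n:ℝ)-3)/4 - (T.card:ℝ)) :=
        le_max_right _ _
      have h7 : (S.card:ℝ) * ((3*(n:ℝ)-3)/4 - (T.card:ℝ))
          ≤ (S.card:ℝ) * max 0 ((3*(n:ℝ)-3)/4 - (T.card:ℝ)) :=
        mul_le_mul_of_nonneg_left hMge (Nat.cast_nonneg _)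
      have hmul : (S.card:ℝ) * ((3*(n:ℝ)-3)/4 - (T.card:ℝ) - ((S.card:ℝ)-1)/2)
          ≤ (S.card:ℝ) * (A.card:ℝ) := by
        linarith only [h6, h7, hU1z]
      exact le_of_mul_le_mul_left (by linarith only [hmul]) (by linarith only [hdp1] : (0:ℝ) < (S.card:ℝ))
    have hK2s : (A.card:ℝ) ≥ ((S.card:ℝ) + (T.card:ℝ))/2 - (n:ℝ)/4 + 1/4 := by
      have hA3z : ((S.card:ℝ) * (T.card:ℝ)) * ((3*(n:ℝ)-3)/4)
          ≤ (T.card:ℝ) * (∑ x ∈ S, (degPlus E x : ℝ))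
            + (S.card:ℝ) * (∑ y ∈ T, (degMinus E y : ℝ)) := by
        have h := hA3
        rw [hc1z, hc2z] at h
        linarith only [h]
      have e1 : (T.card:ℝ) * (∑ x ∈ S, (degPlus E x : ℝ))
          ≤ (T.card:ℝ) * (((S.card:ℝ) * (S.card:ℝ) - (S.card:ℝ))/2 + (S.card:ℝ) * (A.card:ℝ)) :=
        mul_le_mul_of_nonneg_left hU1z (Nat.cast_nonneg _)
      have e2 : (S.card:ℝ) * (∑ y ∈ T, (degMinus E y : ℝ))
          ≤ (S.card:ℝ) * (((n:ℝ) - (S.card:ℝ) - (T.card:ℝ)) * (T.card:ℝ)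
            + ((T.card:ℝ) * (T.card:ℝ) - (T.card:ℝ))/2) :=
        mul_le_mul_of_nonneg_left hU2z (Nat.cast_nonneg _)
      have hmul : ((S.card:ℝ) * (T.card:ℝ))
          * (((S.card:ℝ) + (T.card:ℝ))/2 - (n:ℝ)/4 + 1/4)
          ≤ ((S.card:ℝ) * (T.card:ℝ)) * (A.card:ℝ) := by
        linarith only [hA3z, e1, e2]
      have hpos : (0:ℝ) < (S.card:ℝ) * (T.card:ℝ) :=
        mul_pos (by linarith only [hdp1]) (by linarith only [hdm1R])
      exact le_of_mul_le_mul_left (by linarith only [hmul]) hpos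
    have hpos6 : (0:ℝ) ≤ 6 * (1/256) * (n:ℝ) := by positivity
    exact ⟨by linarith only [hK1s, hpos6], by linarith only [hK2s, hpos6], fun _ => ⟨hK1s, hK2s⟩⟩



end Stmt7Aux

open scoped Classical in
theorem stmt_7 {V : Type} [Fintype V] [DecidableEq V] (E : V → V → Prop) [DecidableRel E]
    (n : ℕ) (hn : Fintype.card V = n)
    (hor : Oriented E)
    (hOre : ∀ x y : V, x ≠ y → ¬ E x y →
      ((degPlus E x : ℝ) + (degMinus E y : ℝ)) ≥ (3 * n - 3) / 4)
    (u v : V) (huv : u ≠ v) (hne : ¬ E u v)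
    (h1 : (oneConnectors E u v : ℝ) < (2 : ℝ) ^ (-24 : ℤ) * n)
    (h2 : (twoConnectors E u v : ℝ) < (2 : ℝ) ^ (-24 : ℤ) * (n : ℝ) ^ 2)
    (h3 : (threeConnectors E u v : ℝ) < (2 : ℝ) ^ (-24 : ℤ) * (n : ℝ) ^ 3) :
    (((Finset.univ.filter fun w : V => ¬ E u w ∧
        ((Finset.univ.filter fun z : V => E u z ∧ E z w).card : ℝ)
          ≥ (2 : ℝ) ^ (-8 : ℤ) * n).card : ℝ)
      + ((Finset.univ.filter fun w : V => ¬ E w v ∧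
        ((Finset.univ.filter fun z : V => E z v ∧ E w z).card : ℝ)
          ≥ (2 : ℝ) ^ (-8 : ℤ) * n).card : ℝ))
      > 11 * n / 16 - 9 * ((degPlus E u : ℝ) + (degMinus E v : ℝ)) / 16 := by
  classical
  have hAmem : ∀ w : V, w ∈ (Finset.univ.filter fun w : V => ¬ E u w ∧
      ((Finset.univ.filter fun z : V => E u z ∧ E z w).card : ℝ)
        ≥ (2 : ℝ) ^ (-8 : ℤ) * n) ↔
      (¬ E u w ∧ ((Finset.univ.filter fun z : V => E u z ∧ E z w).card : ℝ)
        ≥ (2 : ℝ) ^ (-8 : ℤ) * n) := by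
    intro w
    rw [Finset.mem_filter]
    simp only [Finset.mem_univ, true_and]
  obtain ⟨hn5, hK1a, hK2a, hsmalla⟩ :=
    Stmt7Aux.key E n hn hor hOre u v huv hne h1 h2 h3 _ hAmem
  -- reversed graph
  have hor' : Oriented (revRel E) := ⟨hor.1, fun x y h => hor.2 y x h⟩
  have hOre' : ∀ x y : V, x ≠ y → ¬ revRel E x y →
      ((degPlus (revRel E) x : ℝ) + (degMinus (revRel E) y : ℝ)) ≥ (3 * n - 3) / 4 := by
    intro x y hxy hnE
    have h := hOre y x (Ne.symm hxy) hnE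
    have e1 : degPlus (revRel E) x = degMinus E x := by
      unfold degPlus degMinus
      exact Stmt7Aux.card_filter_congr' _ _ (fun _ => Iff.rfl)
    have e2 : degMinus (revRel E) y = degPlus E y := by
      unfold degPlus degMinus
      exact Stmt7Aux.card_filter_congr' _ _ (fun _ => Iff.rfl)
    rw [e1, e2]
    linarith only [h]
  have hone : oneConnectors (revRel E) v u = oneConnectors E u v := by
    unfold oneConnectors
    exact Stmt7Aux.card_filter_congr' _ _ (fun w => by
      unfold revRel
      constructor
      · rintro ⟨a, b, c, d⟩; exact ⟨b, a, d, c⟩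
      · rintro ⟨a, b, c, d⟩; exact ⟨b, a, d, c⟩)
  have htwo : twoConnectors (revRel E) v u = twoConnectors E u v := by
    unfold twoConnectors
    apply Finset.card_bij' (i := fun (p : V × V) _ => (p.2, p.1))
      (j := fun (p : V × V) _ => (p.2, p.1))
    · intro p hp
      rw [Finset.mem_filter] at hp ⊢
      obtain ⟨-, g1, g2, g3, g4, g5, g6, g7, g8⟩ := hp
      exact ⟨by simp, fun hh => g1 hh.symm, g5, g4, g3, g2, g8, g7, g6⟩
    · intro p hp
      rw [Finset.mem_filter] at hp ⊢
      obtain ⟨-, g1, g2, g3, g4, g5, g6, g7, g8⟩ := hp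
      exact ⟨by simp, fun hh => g1 hh.symm, g5, g4, g3, g2, g8, g7, g6⟩
    · intro p _; rfl
    · intro p _; rfl
  have hthree : threeConnectors (revRel E) v u = threeConnectors E u v := by
    unfold threeConnectors
    apply Finset.card_bij' (i := fun (q : V × V × V) _ => (q.2.2, q.2.1, q.1))
      (j := fun (q : V × V × V) _ => (q.2.2, q.2.1, q.1))
    · intro q hq
      rw [Finset.mem_filter] at hq ⊢
      obtain ⟨-, g1, g2, g3, g4, g5, g6, g7, g8, g9, g10, g11, g12, g13⟩ := hq
      exact ⟨by simp, fun hh => g3 hh.symm, fun hh => g2 hh.symm, fun hh => g1 hh.symm,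
        g9, g8, g7, g6, g5, g4, g13, g12, g11, g10⟩
    · intro q hq
      rw [Finset.mem_filter] at hq ⊢
      obtain ⟨-, g1, g2, g3, g4, g5, g6, g7, g8, g9, g10, g11, g12, g13⟩ := hq
      exact ⟨by simp, fun hh => g3 hh.symm, fun hh => g2 hh.symm, fun hh => g1 hh.symm,
        g9, g8, g7, g6, g5, g4, g13, g12, g11, g10⟩
    · intro q _; rfl
    · intro q _; rfl
  have h1' : (oneConnectors (revRel E) v u : ℝ) < (2 : ℝ) ^ (-24 : ℤ) * n := by
    rw [hone]; exact h1
  have h2' : (twoConnectors (revRel E) v u : ℝ) < (2 : ℝ) ^ (-24 : ℤ) * (n : ℝ) ^ 2 := by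
    rw [htwo]; exact h2
  have h3' : (threeConnectors (revRel E) v u : ℝ) < (2 : ℝ) ^ (-24 : ℤ) * (n : ℝ) ^ 3 := by
    rw [hthree]; exact h3
  have hBmem : ∀ w : V, w ∈ (Finset.univ.filter fun w : V => ¬ E w v ∧
      ((Finset.univ.filter fun z : V => E z v ∧ E w z).card : ℝ)
        ≥ (2 : ℝ) ^ (-8 : ℤ) * n) ↔
      (¬ revRel E v w ∧
        ((Finset.univ.filter fun z : V => revRel E v z ∧ revRel E z w).card : ℝ)
          ≥ (2 : ℝ) ^ (-8 : ℤ) * n) := by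
    intro w
    rw [Finset.mem_filter]
    simp only [Finset.mem_univ, true_and]
    have hcq : (Finset.univ.filter fun z : V => E z v ∧ E w z).card
        = (Finset.univ.filter fun z : V => revRel E v z ∧ revRel E z w).card :=
      Stmt7Aux.card_filter_congr' _ _ (fun z => Iff.rfl)
    rw [hcq]
    exact ⟨fun ⟨a, b⟩ => ⟨a, b⟩, fun ⟨a, b⟩ => ⟨a, b⟩⟩
  obtain ⟨-, hK1b, hK2b, hsmallb⟩ :=
    Stmt7Aux.key (revRel E) n hn hor' hOre' v u (Ne.symm huv) hne h1' h2' h3' _ hBmem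
  have ed1 : degPlus (revRel E) v = degMinus E v := by
    unfold degPlus degMinus
    exact Stmt7Aux.card_filter_congr' _ _ (fun _ => Iff.rfl)
  have ed2 : degMinus (revRel E) u = degPlus E u := by
    unfold degPlus degMinus
    exact Stmt7Aux.card_filter_congr' _ _ (fun _ => Iff.rfl)
  rw [ed1, ed2] at hK1b hK2b hsmallb
  rcases le_or_gt n 255 with hsm | hlg
  · obtain ⟨hA1, hA2⟩ := hsmalla hsm
    obtain ⟨hB1, hB2⟩ := hsmallb hsm
    have hn5R : (5:ℝ) ≤ (n:ℝ) := by exact_mod_cast hn5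
    linarith only [hA1, hA2, hB1, hB2, hn5R]
  · have h256 : (256:ℝ) ≤ (n:ℝ) := by exact_mod_cast hlg
    linarith only [hK1a, hK2a, hK1b, hK2b, h256]
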